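/- The antichain cutsets of the lattice of subspaces of a finite-dimensional vector space over a finite field are exactly the level sets, i.e., the sets of all subspaces of a fixed dimension. -/

import Mathlib

/-- An antichain cutset: a set intersecting each maximal chain in exactly one element. -/
def IsAntichainCutset {α : Type*} [PartialOrder α] (A : Set α) : Prop :=
  ∀ c : Set α, IsMaxChain (· ≤ ·) c → ∃! x, x ∈ c ∧ x ∈ A

/-- A poset is strongly connected if any two maximal chains are connected by a finite
sequence of maximal chains in which consecutive chains have symmetric difference of
cardinality two. -/
def StronglyConnectedOrder (α : Type*) [PartialOrder α] : Prop :=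
  ∀ c d : Set α, IsMaxChain (· ≤ ·) c → IsMaxChain (· ≤ ·) d →
    ∃ (n : ℕ) (f : ℕ → Set α), f 0 = c ∧ f n = d ∧
      (∀ i ≤ n, IsMaxChain (· ≤ ·) (f i)) ∧
      ∀ i < n, (symmDiff (f i) (f (i + 1))).ncard = 2

section Aux

open Module

variable {K V : Type*} [Field K] [AddCommGroup V] [Module K V] [FiniteDimensional K V]

/-- In a chain of submodules, smaller finrank implies inclusion. -/
private lemma chain_le_of_finrank_le {c : Set (Submodule K V)} (hc : IsChain (· ≤ ·) c)
    {a b : Submodule K V} (ha : a ∈ c) (hb : b ∈ c) (h : finrank K a ≤ finrank K b) :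
    a ≤ b := by
  rcases eq_or_ne a b with rfl | hne
  · exact le_rfl
  rcases hc ha hb hne with h' | h'
  · exact h'
  · exact le_of_eq
      (Submodule.eq_of_le_of_finrank_eq h' (le_antisymm (Submodule.finrank_mono h') h)).symm

private lemma chain_eq_of_finrank_eq {c : Set (Submodule K V)} (hc : IsChain (· ≤ ·) c)
    {a b : Submodule K V} (ha : a ∈ c) (hb : b ∈ c) (h : finrank K a = finrank K b) :
    a = b :=
  le_antisymm (chain_le_of_finrank_le hc ha hb h.le) (chain_le_of_finrank_le hc hb ha h.ge)

/-- Adjoining a vector not in `U` raises the rank by one. -/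
private lemma finrank_sup_span_singleton' {U : Submodule K V} {v : V} (hv : v ∉ U) :
    finrank K ↥(U ⊔ Submodule.span K {v}) = finrank K U + 1 := by
  have hv0 : v ≠ 0 := fun h => hv (h ▸ U.zero_mem)
  have hdisj : Disjoint U (Submodule.span K {v}) :=
    (Submodule.disjoint_span_singleton' hv0).2 hv
  have key := Submodule.finrank_sup_add_finrank_inf_eq U (Submodule.span K {v})
  rw [hdisj.eq_bot, finrank_bot, finrank_span_singleton hv0] at key
  omega

omit [FiniteDimensional K V] in
/-- A maximal chain of submodules contains `⊥` and `⊤`. -/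
private lemma maxChain_bot_top {c : Set (Submodule K V)} (hc : IsMaxChain (· ≤ ·) c) :
    ⊥ ∈ c ∧ ⊤ ∈ c := by
  constructor
  · have h1 : IsChain (· ≤ ·) (insert (⊥ : Submodule K V) c) :=
      hc.1.insert (fun b _ _ => Or.inl bot_le)
    have := hc.2 h1 (Set.subset_insert _ _)
    rw [this]; exact Set.mem_insert _ _
  · have h1 : IsChain (· ≤ ·) (insert (⊤ : Submodule K V) c) :=
      hc.1.insert (fun b _ _ => Or.inr le_top)
    have := hc.2 h1 (Set.subset_insert _ _)
    rw [this]; exact Set.mem_insert _ _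

/-- A chain containing a submodule of every dimension up to `finrank K V` is maximal. -/
private lemma isMaxChain_of_full {c : Set (Submodule K V)} (hc : IsChain (· ≤ ·) c)
    (hfull : ∀ m ≤ finrank K V, ∃ X ∈ c, finrank K X = m) :
    IsMaxChain (· ≤ ·) c := by
  refine ⟨hc, fun d hd hcd => ?_⟩
  refine Set.Subset.antisymm hcd (fun z hz => ?_)
  obtain ⟨X, hXc, hX⟩ := hfull (finrank K z) (Submodule.finrank_le z)
  have : X = z := chain_eq_of_finrank_eq hd (hcd hXc) hz hX
  exact this ▸ hXc

/-- Every maximal chain of submodules contains a submodule of each dimension `m ≤ dim V`. -/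
private lemma maxChain_exists_finrank {c : Set (Submodule K V)} (hc : IsMaxChain (· ≤ ·) c)
    {m : ℕ} (hm : m ≤ finrank K V) : ∃ X ∈ c, finrank K X = m := by
  by_contra hno
  push_neg at hno
  have hbot : (⊥ : Submodule K V) ∈ c := (maxChain_bot_top hc).1
  have htop : (⊤ : Submodule K V) ∈ c := (maxChain_bot_top hc).2
  -- the chain is finite
  have hfin : c.Finite := by
    have hinj : Set.InjOn (fun W : Submodule K V => finrank K W) c :=
      fun a ha b hb h => chain_eq_of_finrank_eq hc.1 ha hb h
    have himg : ((fun W : Submodule K V => finrank K W) '' c).Finite :=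
      (Set.finite_Iic (finrank K V)).subset
        (by rintro _ ⟨W, _, rfl⟩; exact Submodule.finrank_le W)
    exact Set.Finite.of_finite_image himg hinj
  have hm0 : 0 < m := by
    rcases Nat.eq_zero_or_pos m with h | h
    · exact absurd (by rw [finrank_bot]; omega) (hno ⊥ hbot)
    · exact h
  have hmn : m < finrank K V := by
    rcases lt_or_eq_of_le hm with h | h
    · exact h
    · exact absurd (by rw [finrank_top]; omega) (hno ⊤ htop)
  -- the largest element below level m and the smallest above
  have hbot' : (⊥ : Submodule K V) ∈ {y ∈ c | finrank K y < m} :=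
    ⟨hbot, by rw [finrank_bot]; omega⟩
  obtain ⟨U, -, hUmem, hUmax⟩ :=
    (hfin.subset (Set.sep_subset _ _)).exists_le_maximal hbot'
  have htop' : (⊤ : Submodule K V) ∈ {y ∈ c | m < finrank K y} :=
    ⟨htop, by rw [finrank_top]; omega⟩
  obtain ⟨L, -, hLmem, hLmin⟩ :=
    (hfin.subset (Set.sep_subset _ _)).exists_le_minimal htop'
  obtain ⟨hUc, hUm⟩ := hUmem
  obtain ⟨hLc, hLm⟩ := hLmem
  have hUL : U < L := by
    refine lt_of_le_of_ne (chain_le_of_finrank_le hc.1 hUc hLc (by omega)) ?_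
    intro h; rw [h] at hUm; omega
  obtain ⟨v, hvL, hvU⟩ := SetLike.exists_of_lt hUL
  set X := U ⊔ Submodule.span K {v} with hXdef
  have hXr : finrank K X = finrank K U + 1 := finrank_sup_span_singleton' hvU
  have hXL : X ≤ L := sup_le hUL.le
    ((Submodule.span_singleton_le_iff_mem v L).2 hvL)
  have hUX : U < X := by
    refine lt_of_le_of_ne le_sup_left ?_
    intro h; rw [← h] at hXr; omega
  -- X is comparable with everything in c
  have hchain : IsChain (· ≤ ·) (insert X c) := by
    refine hc.1.insert ?_
    intro y hy _
    by_cases h1 : finrank K y < m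
    · have hyU : y ≤ U := by
        rcases eq_or_ne y U with rfl | hne'
        · exact le_rfl
        rcases hc.1 hy hUc hne' with h | h
        · exact h
        · exact hUmax ⟨hy, h1⟩ h
      exact Or.inr (hyU.trans hUX.le)
    · have h2 : m < finrank K y := lt_of_le_of_ne (not_lt.mp h1) (fun h => hno y hy h.symm)
      have hLy : L ≤ y := by
        rcases eq_or_ne y L with rfl | hne'
        · exact le_rfl
        rcases hc.1 hy hLc hne' with h | h
        · exact hLmin ⟨hy, h2⟩ h
        · exact h
      exact Or.inl (hXL.trans hLy)
  have hXc : X ∈ c := by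
    have := hc.2 hchain (Set.subset_insert _ _)
    rw [this]; exact Set.mem_insert _ _
  have hXm : finrank K X ≠ m := hno X hXc
  have hXlt : finrank K X < m := by omega
  have := hUmax ⟨hXc, hXlt⟩ hUX.le
  exact absurd (le_antisymm this hUX.le) hUX.ne'

/-- Between nested submodules, every intermediate dimension is attained. -/
private lemma exists_intermediate {U W : Submodule K V} (hUW : U ≤ W) {m : ℕ}
    (h1 : finrank K U ≤ m) (h2 : m ≤ finrank K W) :
    ∃ X, U ≤ X ∧ X ≤ W ∧ finrank K X = m := by
  have hpair : IsChain (· ≤ ·) ({U, W} : Set (Submodule K V)) := by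
    intro a ha b hb _
    rcases ha with rfl | ha <;> rcases hb with rfl | hb
    · exact Or.inl le_rfl
    · rw [Set.mem_singleton_iff] at hb; subst hb; exact Or.inl hUW
    · rw [Set.mem_singleton_iff] at ha; subst ha; exact Or.inr hUW
    · rw [Set.mem_singleton_iff] at ha hb; subst ha; subst hb; exact Or.inl le_rfl
  obtain ⟨c, hcmax, hsub⟩ := hpair.exists_maxChain
  obtain ⟨X, hXc, hXm⟩ := maxChain_exists_finrank hcmax (h2.trans (Submodule.finrank_le W))
  refine ⟨X, ?_, ?_, hXm⟩
  · exact chain_le_of_finrank_le hcmax.1 (hsub (by simp)) hXc (by omega)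
  · exact chain_le_of_finrank_le hcmax.1 hXc (hsub (by simp)) (by omega)

/-- The swap lemma: if `W` is in an antichain cutset `A` and `W'` has the same dimension
with `W ⊓ W'` of codimension one in each, then `W' ∈ A`. -/
private lemma swap_mem {A : Set (Submodule K V)} (hA : IsAntichainCutset A)
    {W W' : Submodule K V} (hW : W ∈ A) (hk : finrank K W' = finrank K W)
    (hD : finrank K ↥(W ⊓ W') + 1 = finrank K W) : W' ∈ A := by
  have hne : W ≠ W' := by
    rintro rfl; rw [inf_idem] at hD; omega
  have hS : finrank K ↥(W ⊔ W') = finrank K W + 1 := by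
    have := Submodule.finrank_sup_add_finrank_inf_eq W W'
    omega
  have hDW' : W ⊓ W' < W' := by
    refine lt_of_le_of_ne inf_le_right ?_
    intro h
    have h2 : W' ≤ W := by rw [← h]; exact inf_le_left
    exact hne (Submodule.eq_of_le_of_finrank_eq h2 hk).symm
  have hW'S : W' < W ⊔ W' := by
    refine lt_of_le_of_ne le_sup_right ?_
    intro h
    have h2 : W ≤ W' := by rw [h]; exact le_sup_left
    exact hne (Submodule.eq_of_le_of_finrank_eq h2 hk.symm)
  have hDS : W ⊓ W' ≤ W ⊔ W' := hDW'.le.trans hW'S.le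
  have hchain3 : IsChain (· ≤ ·) ({W ⊓ W', W', W ⊔ W'} : Set (Submodule K V)) := by
    intro a ha b hb _
    simp only [Set.mem_insert_iff, Set.mem_singleton_iff] at ha hb
    rcases ha with rfl | rfl | rfl <;> rcases hb with rfl | rfl | rfl <;>
      first
        | exact Or.inl le_rfl
        | exact Or.inl hDW'.le
        | exact Or.inl hW'S.le
        | exact Or.inl hDS
        | exact Or.inr hDW'.le
        | exact Or.inr hW'S.le
        | exact Or.inr hDS
  obtain ⟨c, hcmax, hsub⟩ := hchain3.exists_maxChain
  have hDc : W ⊓ W' ∈ c := hsub (by simp)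
  have hW'c : W' ∈ c := hsub (by simp)
  have hSc : W ⊔ W' ∈ c := hsub (by simp)
  have hWnc : W ∉ c := fun h => hne (chain_eq_of_finrank_eq hcmax.1 h hW'c hk.symm)
  -- trichotomy for elements of c distinct from W'
  have htricho : ∀ y ∈ c, y ≠ W' → y ≤ W ⊓ W' ∨ W ⊔ W' ≤ y := by
    intro y hy hyne
    by_cases h1 : y ≤ W ⊓ W'
    · exact Or.inl h1
    by_cases h2 : W ⊔ W' ≤ y
    · exact Or.inr h2
    exfalso
    have hlt1 : W ⊓ W' < y := by
      have hne1 : W ⊓ W' ≠ y := fun h => h1 h.ge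
      rcases hcmax.1 hDc hy hne1 with h | h
      · exact lt_of_le_of_ne h hne1
      · exact absurd h h1
    have hlt2 : y < W ⊔ W' := by
      have hne2 : y ≠ W ⊔ W' := fun h => h2 h.ge
      rcases hcmax.1 hy hSc hne2 with h | h
      · exact lt_of_le_of_ne h hne2
      · exact absurd h h2
    have ha := Submodule.finrank_lt_finrank_of_lt hlt1
    have hb := Submodule.finrank_lt_finrank_of_lt hlt2
    exact hyne (chain_eq_of_finrank_eq hcmax.1 hy hW'c (by omega))
  -- the swapped chain
  set c' := insert W (c \ {W'}) with hc'def
  have hc' : IsChain (· ≤ ·) c' := by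
    refine IsChain.insert (hcmax.1.mono Set.diff_subset) ?_
    intro y hy _
    rcases htricho y hy.1 hy.2 with h | h
    · exact Or.inr (h.trans inf_le_left)
    · exact Or.inl (le_sup_left.trans h)
  have hc'max : IsMaxChain (· ≤ ·) c' := by
    refine isMaxChain_of_full hc' ?_
    intro m hm
    obtain ⟨X, hXc, hXm⟩ := maxChain_exists_finrank hcmax hm
    by_cases hXW' : X = W'
    · exact ⟨W, Set.mem_insert _ _, by rw [← hk, ← hXW', hXm]⟩
    · exact ⟨X, Set.mem_insert_of_mem _ ⟨hXc, hXW'⟩, hXm⟩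
  obtain ⟨x', hx', hx'uniq⟩ := hA c' hc'max
  obtain ⟨x, hx, -⟩ := hA c hcmax
  by_cases hxW' : x = W'
  · exact hxW' ▸ hx.2
  · have h1 : x = x' := hx'uniq x ⟨Set.mem_insert_of_mem _ ⟨hx.1, hxW'⟩, hx.2⟩
    have h2 : W = x' := hx'uniq W ⟨Set.mem_insert _ _, hW⟩
    exact absurd (by rw [h2, ← h1]; exact hx.1) hWnc

/-- Membership in an antichain cutset propagates to all subspaces of the same dimension. -/
private lemma prop_mem {A : Set (Submodule K V)} (hA : IsAntichainCutset A) :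
    ∀ t : ℕ, ∀ W W' : Submodule K V, W ∈ A →
      finrank K W' = finrank K W → finrank K W - finrank K ↥(W ⊓ W') ≤ t → W' ∈ A := by
  intro t
  induction t with
  | zero =>
    intro W W' hW hk hle
    have h1 : finrank K ↥(W ⊓ W') ≤ finrank K W := Submodule.finrank_mono inf_le_left
    have h2 : W ⊓ W' = W := Submodule.eq_of_le_of_finrank_eq inf_le_left (by omega)
    have h3 : W ≤ W' := inf_eq_left.mp h2
    have h4 : W = W' := Submodule.eq_of_le_of_finrank_eq h3 hk.symm
    exact h4 ▸ hW
  | succ t ih =>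
    intro W W' hW hk hle
    by_cases hne : W = W'
    · exact hne ▸ hW
    have hdk : finrank K ↥(W ⊓ W') < finrank K W := by
      refine lt_of_le_of_ne (Submodule.finrank_mono inf_le_left) ?_
      intro h
      have h2 : W ⊓ W' = W := Submodule.eq_of_le_of_finrank_eq inf_le_left h
      exact hne (Submodule.eq_of_le_of_finrank_eq (inf_eq_left.mp h2) hk.symm)
    have hW'W : ¬ W' ≤ W := fun h =>
      hne (Submodule.eq_of_le_of_finrank_eq h hk).symm
    obtain ⟨v, hvW', hvW⟩ := SetLike.not_le_iff_exists.mp hW'W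
    obtain ⟨H, hDH, hHW, hHrank⟩ :=
      exists_intermediate (inf_le_left : W ⊓ W' ≤ W)
        (show finrank K ↥(W ⊓ W') ≤ finrank K W - 1 by omega) (Nat.sub_le _ _)
    have hvH : v ∉ H := fun h => hvW (hHW h)
    set W'' := H ⊔ Submodule.span K {v} with hW''def
    have hW''rank : finrank K W'' = finrank K W := by
      rw [hW''def, finrank_sup_span_singleton' hvH, hHrank]; omega
    have hvW'' : v ∈ W'' := Submodule.mem_sup_right (Submodule.mem_span_singleton_self v)
    have hHle : H ≤ W ⊓ W'' := le_inf hHW le_sup_left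
    have hinfne : W ⊓ W'' ≠ W := by
      intro h
      have h2 : W ≤ W'' := inf_eq_left.mp h
      have h3 : W = W'' := Submodule.eq_of_le_of_finrank_eq h2 hW''rank.symm
      exact hvW (h3 ▸ hvW'')
    have hinfrank : finrank K ↥(W ⊓ W'') + 1 = finrank K W := by
      have hb1 : finrank K H ≤ finrank K ↥(W ⊓ W'') := Submodule.finrank_mono hHle
      have hb2 : finrank K ↥(W ⊓ W'') < finrank K W :=
        Submodule.finrank_lt_finrank_of_lt (lt_of_le_of_ne inf_le_left hinfne)
      omega
    have hW''A : W'' ∈ A := swap_mem hA hW hW''rank hinfrank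
    refine ih W'' W' hW''A (by rw [hk, hW''rank]) ?_
    have hvD : v ∉ W ⊓ W' := fun h => hvW ((Submodule.mem_inf.mp h).1)
    have hHW'' : H ≤ W'' := by rw [hW''def]; exact le_sup_left
    have hspanW'' : Submodule.span K {v} ≤ W'' := by rw [hW''def]; exact le_sup_right
    have hsub : (W ⊓ W') ⊔ Submodule.span K {v} ≤ W'' ⊓ W' :=
      sup_le (le_inf (hDH.trans hHW'') inf_le_right)
        (le_inf hspanW'' ((Submodule.span_singleton_le_iff_mem v W').2 hvW'))
    have hr1 : finrank K ↥((W ⊓ W') ⊔ Submodule.span K {v}) = finrank K ↥(W ⊓ W') + 1 :=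
      finrank_sup_span_singleton' hvD
    have hr2 := Submodule.finrank_mono hsub
    rw [hW''rank]
    omega

end Aux

/-- In the subspace lattice of a finite-dimensional vector space over a finite field,
the antichain cutsets are exactly the sets of subspaces of a fixed dimension. -/
theorem antichain_cutsets_subspace_lattice {K V : Type*} [Field K] [Fintype K]
    [AddCommGroup V] [Module K V] [FiniteDimensional K V] (A : Set (Submodule K V)) :
    IsAntichainCutset A ↔
      ∃ k ≤ Module.finrank K V, A = {W : Submodule K V | Module.finrank K W = k} := by
  constructor
  · intro hA
    have hempty : IsChain (· ≤ ·) (∅ : Set (Submodule K V)) := Set.pairwise_empty _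
    obtain ⟨c₀, hc₀, -⟩ := hempty.exists_maxChain
    obtain ⟨x₀, ⟨hx₀c, hx₀A⟩, -⟩ := hA c₀ hc₀
    refine ⟨Module.finrank K x₀, Submodule.finrank_le x₀, ?_⟩
    ext W
    simp only [Set.mem_setOf_eq]
    constructor
    · intro hW
      have hsing : IsChain (· ≤ ·) ({W} : Set (Submodule K V)) :=
        Set.pairwise_singleton _ _
      obtain ⟨c, hcmax, hsub⟩ := hsing.exists_maxChain
      have hWc : W ∈ c := hsub rfl
      obtain ⟨X, hXc, hXr⟩ := maxChain_exists_finrank hcmax (Submodule.finrank_le x₀)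
      have hXA : X ∈ A := prop_mem hA (Module.finrank K x₀) x₀ X hx₀A hXr (Nat.sub_le _ _)
      obtain ⟨x, -, huniq⟩ := hA c hcmax
      have h1 := huniq W ⟨hWc, hW⟩
      have h2 := huniq X ⟨hXc, hXA⟩
      rw [h1.trans h2.symm, hXr]
    · intro hW
      exact prop_mem hA (Module.finrank K x₀) x₀ W hx₀A hW (Nat.sub_le _ _)
  · rintro ⟨k, hk, rfl⟩
    intro c hcmax
    obtain ⟨X, hXc, hXr⟩ := maxChain_exists_finrank hcmax hk
    exact ⟨X, ⟨hXc, hXr⟩, fun y ⟨hyc, hyr⟩ =>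
      chain_eq_of_finrank_eq hcmax.1 hyc hXc (hyr.trans hXr.symm)⟩
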